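/- For every h ∈ ℕ, let G_h be the graph obtained from the complete binary tree of height h by adding edges so that, for every leaf ℓ, the set of vertices on the root-to-leaf path to ℓ forms a clique. Then for every partition P of V(G_h) into cliques, there exists a root-to-leaf path in G_h such that all h+1 vertices on the path belong to pairwise distinct classes of P. -/

import Mathlib

/-- Vertices of the complete binary tree of height `h`: binary strings of length at most `h`. -/
def TreeVert (h : ℕ) : Type := {l : List Bool // l.length ≤ h}

instance (h : ℕ) : DecidableEq (TreeVert h) := by
  unfold TreeVert; infer_instance

/-- The graph `G_h`: the complete binary tree of height `h` in which every
root-to-leaf path is completed into a clique.  Two distinct vertices are adjacent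
iff one lies on the root path of the other, i.e. one is a prefix of the other. -/
def treeCliqueGraph (h : ℕ) : SimpleGraph (TreeVert h) where
  Adj u v := u ≠ v ∧ (u.1 <+: v.1 ∨ v.1 <+: u.1)
  symm := by constructor; rintro u v ⟨hne, hpre⟩; exact ⟨hne.symm, hpre.symm⟩
  loopless := by constructor; rintro u ⟨hne, _⟩; exact hne rfl

/-- `P` is a partition of the vertex set of `G` into cliques. -/
def IsCliquePartition {V : Type*} [DecidableEq V] (G : SimpleGraph V)
    (P : Finset (Finset V)) : Prop :=
  (∀ C ∈ P, G.IsClique (C : Set V)) ∧ (∀ v : V, ∃! C, C ∈ P ∧ v ∈ C)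

lemma key_chain_lemma {α : Type} : ∀ (h : ℕ) (c : List Bool → α),
    (∀ u v : List Bool, u.length ≤ h → v.length ≤ h → c u = c v → u <+: v ∨ v <+: u) →
    ∃ ℓ : List Bool, ℓ.length = h ∧
      ∀ u v : List Bool, u <+: ℓ → v <+: ℓ → c u = c v → u = v := by
  intro h
  induction h with
  | zero =>
    intro c _
    refine ⟨[], rfl, ?_⟩
    intro u v hu hv _
    rw [List.prefix_nil.mp hu, List.prefix_nil.mp hv]
  | succ n ih =>
    intro c hc
    -- choose a bit b such that no vertex in the b-subtree shares the root's color
    have hb : ∃ b : Bool, ∀ l : List Bool, l.length ≤ n → c (b :: l) ≠ c [] := by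
      by_contra hcon
      push_neg at hcon
      obtain ⟨u, hu, hcu⟩ := hcon false
      obtain ⟨v, hv, hcv⟩ := hcon true
      have := hc (false :: u) (true :: v) (by simpa using hu) (by simpa using hv)
        (hcu.trans hcv.symm)
      rcases this with hp | hp <;>
        · rw [List.cons_prefix_cons] at hp; simp at hp
    obtain ⟨b, hb⟩ := hb
    obtain ⟨ℓ, hℓlen, hℓ⟩ := ih (fun l => c (b :: l)) (by
      intro u v hu hv hcuv
      have := hc (b :: u) (b :: v) (by simpa using hu) (by simpa using hv) hcuv
      rcases this with hp | hp <;> rw [List.cons_prefix_cons] at hp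
      · exact Or.inl hp.2
      · exact Or.inr hp.2)
    refine ⟨b :: ℓ, by simp [hℓlen], ?_⟩
    have pref : ∀ u : List Bool, u <+: b :: ℓ → u = [] ∨ ∃ u', u = b :: u' ∧ u' <+: ℓ := by
      intro u hu
      cases u with
      | nil => exact Or.inl rfl
      | cons x u' =>
        rw [List.cons_prefix_cons] at hu
        exact Or.inr ⟨u', by rw [hu.1], hu.2⟩
    intro u v hu hv hcuv
    rcases pref u hu with rfl | ⟨u', rfl, hu'⟩ <;> rcases pref v hv with rfl | ⟨v', rfl, hv'⟩
    · rfl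
    · exact absurd hcuv.symm (hb v' (hv'.length_le.trans (le_of_eq hℓlen)))
    · exact absurd hcuv (hb u' (hu'.length_le.trans (le_of_eq hℓlen)))
    · rw [hℓ u' v' hu' hv' hcuv]

theorem stmt_11 (h : ℕ) (P : Finset (Finset (TreeVert h)))
    (hP : IsCliquePartition (treeCliqueGraph h) P) :
    ∃ ℓ : List Bool, ℓ.length = h ∧
      ∀ C ∈ P, ∀ u v : TreeVert h, u ∈ C → v ∈ C →
        u.1 <+: ℓ → v.1 <+: ℓ → u = v := by
  classical
  obtain ⟨hclique, huniq⟩ := hP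
  -- the class of a vertex
  set cl : TreeVert h → Finset (TreeVert h) := fun v => (huniq v).exists.choose with hcl
  have hclmem : ∀ v : TreeVert h, cl v ∈ P ∧ v ∈ cl v := fun v => (huniq v).exists.choose_spec
  have hcluniq : ∀ (v : TreeVert h) (C : Finset (TreeVert h)), C ∈ P → v ∈ C → cl v = C := by
    intro v C hCP hvC
    exact ((huniq v).unique (hclmem v) ⟨hCP, hvC⟩)
  set c : List Bool → Finset (TreeVert h) :=
    fun l => if hl : l.length ≤ h then cl ⟨l, hl⟩ else ∅ with hc
  obtain ⟨ℓ, hℓlen, hℓ⟩ := key_chain_lemma h c (by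
    intro u v hu hv hcuv
    rw [hc] at hcuv
    simp only [hu, hv, dif_pos] at hcuv
    by_cases heq : (⟨u, hu⟩ : TreeVert h) = ⟨v, hv⟩
    · exact Or.inl (by rw [Subtype.mk.injEq] at heq; rw [heq])
    · have hadj := hclique _ (hclmem ⟨u, hu⟩).1 (hclmem ⟨u, hu⟩).2
        (by rw [hcuv]; exact (hclmem ⟨v, hv⟩).2) heq
      exact hadj.2)
  refine ⟨ℓ, hℓlen, ?_⟩
  intro C hCP u v huC hvC hupre hvpre
  have hcu : c u.1 = C := by
    rw [hc]; simp only [u.2, dif_pos]; exact hcluniq _ C hCP huC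
  have hcv : c v.1 = C := by
    rw [hc]; simp only [v.2, dif_pos]; exact hcluniq _ C hCP hvC
  exact Subtype.ext (hℓ u.1 v.1 hupre hvpre (hcu.trans hcv.symm))
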